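/- arXiv:math/0005165 — 3 statements merged into one kernel-verified Lean document; each statement's English description precedes it below -/
import Mathlib

section
/- For every f ∈ A = ℂ⟨x,y⟩, every n ≥ 1 and all X, Y, A', B' ∈ M_n(ℂ), the derivative at t = 0 of the polynomial map t ↦ Trace( f(X + tA', Y + tB') ) equals Trace( (∂f/∂x)(X,Y) · A' ) + Trace( (∂f/∂y)(X,Y) · B' ), where ∂f/∂x, ∂f/∂y ∈ A are the cyclic derivatives of f and (∂f/∂x)(X,Y) denotes their evaluation at (X,Y). -/
/- STATEMENT 11: For f ∈ A = ℂ⟨x,y⟩, n ≥ 1 and X, Y, A', B' ∈ M_n(ℂ), the derivative at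
t = 0 of t ↦ Trace(f(X + tA', Y + tB')) equals
Trace((∂f/∂x)(X,Y)·A') + Trace((∂f/∂y)(X,Y)·B'), with ∂f/∂x, ∂f/∂y the cyclic
derivatives.

A = ℂ⟨x,y⟩ is modelled as `FreeAlgebra ℂ (Fin 2)`, x the generator `0`, y the
generator `1`. -/

noncomputable section

open scoped BigOperators

/-- The word (monomial) in `ℂ⟨x,y⟩` associated to a list of letters. -/
def wordProd (w : List (Fin 2)) : FreeAlgebra ℂ (Fin 2) :=
  (w.map fun z => FreeAlgebra.ι ℂ z).prod

/-- The list obtained from `w` by deleting the entry at position `i` and cyclically rotating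
so that the entries after position `i` come first. -/
def rotAt (w : List (Fin 2)) (i : ℕ) : List (Fin 2) :=
  w.drop (i + 1) ++ w.take i

/-- Evaluation `f ↦ f(X,Y)`: the unital algebra homomorphism `ℂ⟨x,y⟩ → M_n(ℂ)`
sending x ↦ X, y ↦ Y, applied to f. -/
def evalM {n : ℕ} (X Y : Matrix (Fin n) (Fin n) ℂ) (f : FreeAlgebra ℂ (Fin 2)) :
    Matrix (Fin n) (Fin n) ℂ :=
  FreeAlgebra.lift ℂ ![X, Y] f

attribute [local instance] Matrix.frobeniusSeminormedAddCommGroup Matrix.frobeniusNormedAddCommGroup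
  Matrix.frobeniusNormedRing Matrix.frobeniusNormedSpace Matrix.frobeniusNormedAlgebra

lemma lift_wordProd {S : Type} [Ring S] [Algebra ℂ S] (g : Fin 2 → S) (w : List (Fin 2)) :
    FreeAlgebra.lift ℂ g (wordProd w) = (w.map g).prod := by
  induction w with
  | nil => simp [wordProd]
  | cons z w ih =>
    simp only [wordProd, List.map_cons, List.prod_cons] at ih ⊢
    rw [map_mul, FreeAlgebra.lift_ι_apply, ih]

lemma wordProd_append (w₁ w₂ : List (Fin 2)) :
    wordProd (w₁ ++ w₂) = wordProd w₁ * wordProd w₂ := by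
  simp [wordProd]

lemma mem_span_word (f : FreeAlgebra ℂ (Fin 2)) :
    f ∈ Submodule.span ℂ (Set.range wordProd) := by
  induction f using FreeAlgebra.induction with
  | grade0 c =>
    have : (algebraMap ℂ (FreeAlgebra ℂ (Fin 2))) c = c • wordProd [] := by
      simp [wordProd, Algebra.algebraMap_eq_smul_one]
    rw [this]
    exact Submodule.smul_mem _ _ (Submodule.subset_span ⟨[], rfl⟩)
  | grade1 z =>
    have : FreeAlgebra.ι ℂ z = wordProd [z] := by simp [wordProd]
    rw [this]; exact Submodule.subset_span ⟨[z], rfl⟩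
  | mul a b ha hb =>
    refine Submodule.span_induction (p := fun a _ => a * b ∈ Submodule.span ℂ (Set.range wordProd))
      ?_ ?_ ?_ ?_ ha
    · rintro x ⟨w₁, rfl⟩
      refine Submodule.span_induction (p := fun b _ => wordProd w₁ * b ∈ Submodule.span ℂ (Set.range wordProd))
        ?_ ?_ ?_ ?_ hb
      · rintro y ⟨w₂, rfl⟩
        rw [← wordProd_append]
        exact Submodule.subset_span ⟨w₁ ++ w₂, rfl⟩
      · simp
      · intro x y _ _ hx hy; rw [mul_add]; exact Submodule.add_mem _ hx hy
      · intro c x _ hx; rw [mul_smul_comm]; exact Submodule.smul_mem _ _ hx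
    · simp
    · intro x y _ _ hx hy; rw [add_mul]; exact Submodule.add_mem _ hx hy
    · intro c x _ hx; rw [smul_mul_assoc]; exact Submodule.smul_mem _ _ hx
  | add a b ha hb => exact Submodule.add_mem _ ha hb

lemma hasDerivAt_wordProd {n : ℕ} (Mv Nv : Fin 2 → Matrix (Fin n) (Fin n) ℂ)
    (w : List (Fin 2)) :
    HasDerivAt (fun t : ℂ => ((w.map fun z => Mv z + t • Nv z)).prod)
      (∑ j : Fin w.length,
        ((w.take j).map Mv).prod * Nv (w.get j) * ((w.drop (j + 1)).map Mv).prod) 0 := by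
  induction w with
  | nil => simp; exact hasDerivAt_const (0 : ℂ) (1 : Matrix (Fin n) (Fin n) ℂ)
  | cons z w ih =>
    have hu : HasDerivAt (fun t : ℂ => Mv z + t • Nv z) (Nv z) 0 := by
      exact (((hasDerivAt_id (0 : ℂ)).smul_const (Nv z)).const_add (Mv z)).congr_deriv (by simp)
    simp only [List.map_cons, List.prod_cons, List.length_cons]
    convert hu.mul ih using 1
    any_goals rfl
    rw [Fin.sum_univ_succ]
    simp [Finset.mul_sum, mul_assoc]


theorem ginzburg_trace_derivative_formula
    -- `D z` is the cyclic derivative ∂/∂z, determined ℂ-linearly by its values on words: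
    (D : Fin 2 → FreeAlgebra ℂ (Fin 2) →ₗ[ℂ] FreeAlgebra ℂ (Fin 2))
    (hD : ∀ z : Fin 2, ∀ w : List (Fin 2),
      D z (wordProd w) =
        ∑ j : Fin w.length, if w.get j = z then wordProd (rotAt w j) else 0) :
    ∀ f : FreeAlgebra ℂ (Fin 2), ∀ n : ℕ, 1 ≤ n →
      ∀ X Y A' B' : Matrix (Fin n) (Fin n) ℂ,
        deriv (fun t : ℂ => Matrix.trace (evalM (X + t • A') (Y + t • B') f)) 0 =
          Matrix.trace (evalM X Y (D 0 f) * A') +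
            Matrix.trace (evalM X Y (D 1 f) * B') := by
  intro f n _hn X Y A' B'
  set Mv : Fin 2 → Matrix (Fin n) (Fin n) ℂ := ![X, Y] with hMv
  set Nv : Fin 2 → Matrix (Fin n) (Fin n) ℂ := ![A', B'] with hNv
  suffices h : HasDerivAt (fun t : ℂ => Matrix.trace (evalM (X + t • A') (Y + t • B') f))
      (Matrix.trace (evalM X Y (D 0 f) * A') + Matrix.trace (evalM X Y (D 1 f) * B')) 0 from
    h.deriv
  refine Submodule.span_induction
    (p := fun g _ => HasDerivAt (fun t : ℂ => Matrix.trace (evalM (X + t • A') (Y + t • B') g))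
      (Matrix.trace (evalM X Y (D 0 g) * A') + Matrix.trace (evalM X Y (D 1 g) * B')) 0)
    ?_ ?_ ?_ ?_ (mem_span_word f)
  · rintro g ⟨w, rfl⟩
    have hfun : ∀ t : ℂ, ∀ z : Fin 2, (![X + t • A', Y + t • B'] : Fin 2 → _) z
        = Mv z + t • Nv z := by
      intro t z; fin_cases z <;> simp [hMv, hNv]
    let T : Matrix (Fin n) (Fin n) ℂ →L[ℂ] ℂ :=
      LinearMap.toContinuousLinearMap (Matrix.traceLinearMap (Fin n) ℂ ℂ)
    have hB := hasDerivAt_wordProd Mv Nv w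
    have hT := T.hasFDerivAt.comp_hasDerivAt 0 hB
    have hTeq : ∀ M : Matrix (Fin n) (Fin n) ℂ, T M = Matrix.trace M := fun _ => rfl
    convert hT using 1
    any_goals rfl
    · funext t
      show Matrix.trace _ = T _
      rw [hTeq, evalM, show (![X + t • A', Y + t • B'] : Fin 2 → Matrix (Fin n) (Fin n) ℂ)
        = fun z => Mv z + t • Nv z from funext (hfun t), lift_wordProd]
    · erw [hTeq]; rw [Matrix.trace_sum]
      have lhs_eq : Matrix.trace (evalM X Y (D 0 (wordProd w)) * A')
            + Matrix.trace (evalM X Y (D 1 (wordProd w)) * B')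
          = ∑ z : Fin 2, Matrix.trace (evalM X Y (D z (wordProd w)) * Nv z) := by
        rw [Fin.sum_univ_two]; simp [hNv]
      rw [lhs_eq]
      have step : ∀ z : Fin 2, Matrix.trace (evalM X Y (D z (wordProd w)) * Nv z)
          = ∑ j : Fin w.length, if w.get j = z then
              Matrix.trace (evalM X Y (wordProd (rotAt w j)) * Nv z) else 0 := by
        intro z
        rw [hD z w, evalM, map_sum, Finset.sum_mul, Matrix.trace_sum]
        refine Finset.sum_congr rfl fun j _ => ?_
        simp only [List.get_eq_getElem]
        split_ifs <;> simp [evalM]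
      simp only [step]
      rw [Finset.sum_comm]
      refine Finset.sum_congr rfl fun j _ => ?_
      rw [Finset.sum_ite_eq Finset.univ (w.get j)
        (fun z => Matrix.trace (evalM X Y (wordProd (rotAt w j)) * Nv z))]
      simp only [Finset.mem_univ, if_true]
      rw [evalM, lift_wordProd, rotAt, List.map_append, List.prod_append, ← hMv,
        Matrix.trace_mul_cycle, Matrix.trace_mul_cycle]
  · simp only [map_zero, evalM]
    simpa using hasDerivAt_const (0 : ℂ) (0 : ℂ)
  · intro a b _ _ ha hb
    have := ha.add hb
    convert this using 1
    any_goals rfl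
    · funext t; simp [evalM, map_add, Matrix.add_mul, Matrix.trace_add]
    · simp only [evalM, map_add, Matrix.add_mul, Matrix.trace_add]; ring
  · intro c a _ ha
    have := ha.const_mul c
    convert this using 1
    any_goals rfl
    · funext t
      simp [evalM, map_smul, Matrix.trace_smul, smul_eq_mul]
    · simp only [evalM, map_smul, Matrix.smul_mul, Matrix.trace_smul, smul_eq_mul]; ring
end
end

section
/- Fix n ≥ 1. For a polynomial function F : M_n(ℂ) × M_n(ℂ) → ℂ, write ∂F/∂X_{ij}(X,Y) for the directional derivative of F at (X,Y) along (E_{ij}, 0) and ∂F/∂Y_{ij}(X,Y) for the directional derivative along (0, E_{ij}), where E_{ij} is the matrix unit. Then for all f, g ∈ A = ℂ⟨x,y⟩ and all X, Y ∈ M_n(ℂ): Σ_{i,j=1}^n ( ∂(tr f)/∂X_{ij}(X,Y) · ∂(tr g)/∂Y_{ji}(X,Y) − ∂(tr f)/∂Y_{ji}(X,Y) · ∂(tr g)/∂X_{ij}(X,Y) ) = Trace( ({f,g}_ω)(X,Y) ). In other words, f mod [A,A] ↦ tr f is a Lie algebra homomorphism from (A/[A,A], {·,·}_ω) to the Poisson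 algebra of polynomial functions on M_n(ℂ) ⊕ M_n(ℂ) with the symplectic form ω_Rep((U,V),(U′,V′)) = Trace(U·V′ − U′·V). (Proposition 3.3 of the paper, for the one-vertex one-loop quiver.) -/
/- STATEMENT 12 (Proposition 3.3 of the paper, for the one-vertex one-loop quiver):
For all f, g ∈ A = ℂ⟨x,y⟩ and X, Y ∈ M_n(ℂ),
Σ_{i,j} ( ∂(tr f)/∂X_{ij}·∂(tr g)/∂Y_{ji} − ∂(tr f)/∂Y_{ji}·∂(tr g)/∂X_{ij} )
  = Trace( ({f,g}_ω)(X,Y) ),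
i.e. f mod [A,A] ↦ tr f is a Lie algebra homomorphism to the Poisson algebra of
polynomial functions on M_n(ℂ) ⊕ M_n(ℂ) with symplectic form
ω_Rep((U,V),(U′,V′)) = Trace(U·V′ − U′·V).

A = ℂ⟨x,y⟩ is modelled as `FreeAlgebra ℂ (Fin 2)`, x the generator `0`, y the
generator `1`; ω is the symplectic form with ω(x,y) = 1 = −ω(y,x), ω(x,x) = ω(y,y) = 0.
The directional derivative ∂F/∂X_{ij}(X,Y) is the derivative at t = 0 of
t ↦ F(X + t·E_{ij}, Y), where E_{ij} is the matrix unit, and similarly for ∂F/∂Y_{ij}. -/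

noncomputable section

open scoped BigOperators

/-- The value of the pairing `{·,·}_ω` on a pair of words `u_1⋯u_p`, `v_1⋯v_q`:
`Σ_{i,j} ω(u_i, v_j) • u_{i+1}⋯u_p u_1⋯u_{i−1} v_{j+1}⋯v_q v_1⋯v_{j−1}`. -/
def wordBracket (ω : Fin 2 → Fin 2 → ℂ) (u v : List (Fin 2)) : FreeAlgebra ℂ (Fin 2) :=
  ∑ i : Fin u.length, ∑ j : Fin v.length,
    ω (u.get i) (v.get j) • wordProd (rotAt u i ++ rotAt v j)

-- auxiliary development
namespace Aux

variable {n : ℕ}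

abbrev Mn (n : ℕ) := Matrix (Fin n) (Fin n) ℂ
abbrev MnD (n : ℕ) := Matrix (Fin n) (Fin n) (DualNumber ℂ)

/-- dual-number matrix with value `X` and infinitesimal part `E`. -/
def dn (X E : Mn n) : MnD n := Matrix.of fun k l => (X k l, E k l)

/-- evaluation into dual-number matrices. -/
def evalD (X Y Ex Ey : Mn n) : FreeAlgebra ℂ (Fin 2) →ₐ[ℂ] MnD n :=
  FreeAlgebra.lift ℂ ![dn X Ex, dn Y Ey]

def fstM (M : MnD n) : Mn n := M.map TrivSqZeroExt.fst
def sndM (M : MnD n) : Mn n := M.map TrivSqZeroExt.snd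

@[simp] lemma fstM_apply (M : MnD n) (k l) : fstM M k l = (M k l).fst := rfl
@[simp] lemma sndM_apply (M : MnD n) (k l) : sndM M k l = (M k l).snd := rfl

lemma sndM_mul (M N : MnD n) : sndM (M * N) = fstM M * sndM N + sndM M * fstM N := by
  ext k l
  simp [Matrix.mul_apply, TrivSqZeroExt.snd_sum, TrivSqZeroExt.snd_mul, Finset.sum_add_distrib,
    smul_eq_mul, mul_comm]

lemma evalA_eq (X Y : Mn n) (f : FreeAlgebra ℂ (Fin 2)) :
    evalM X Y f = FreeAlgebra.lift ℂ ![X, Y] f := rfl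

lemma fstM_evalD (X Y Ex Ey : Mn n) (f : FreeAlgebra ℂ (Fin 2)) :
    fstM (evalD X Y Ex Ey f) = evalM X Y f := by
  have : (((TrivSqZeroExt.fstHom ℂ ℂ ℂ).mapMatrix (m := Fin n)).comp
      (evalD X Y Ex Ey)) = FreeAlgebra.lift ℂ ![X, Y] := by
    apply FreeAlgebra.hom_ext
    funext i
    fin_cases i <;>
      · ext k l
        simp [evalD, dn, TrivSqZeroExt.fstHom, AlgHom.mapMatrix]
        rfl
  have h2 := congrArg (fun φ => φ f) this
  exact h2

end Aux

namespace Aux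
variable {n : ℕ}

lemma hasDeriv_entry (X Y Ex Ey : Mn n) (f : FreeAlgebra ℂ (Fin 2)) (k l : Fin n) :
    HasDerivAt (fun t : ℂ => evalM (X + t • Ex) (Y + t • Ey) f k l)
      (sndM (evalD X Y Ex Ey f) k l) 0 := by
  induction f using FreeAlgebra.induction generalizing k l with
  | grade0 r =>
    have hfun : (fun t : ℂ => evalM (X + t • Ex) (Y + t • Ey) (algebraMap ℂ _ r) k l)
        = fun _ : ℂ => (algebraMap ℂ (Mn n) r) k l := by
      funext t; rw [evalA_eq, AlgHom.commutes]
    have h2 : sndM (evalD X Y Ex Ey (algebraMap ℂ _ r)) k l = 0 := by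
      rw [evalD, AlgHom.commutes]
      simp [Matrix.algebraMap_matrix_apply, apply_ite, TrivSqZeroExt.algebraMap_eq_inl]
    rw [hfun, h2]
    exact hasDerivAt_const 0 _
  | grade1 i =>
    have hsd : sndM (evalD X Y Ex Ey (FreeAlgebra.ι ℂ i)) k l = ![Ex, Ey] i k l := by
      rw [evalD, FreeAlgebra.lift_ι_apply]
      fin_cases i <;> simp [dn] <;> rfl
    have hfun : (fun t : ℂ => evalM (X + t • Ex) (Y + t • Ey) (FreeAlgebra.ι ℂ i) k l)
        = fun t : ℂ => ![X, Y] i k l + t * ![Ex, Ey] i k l := by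
      funext t; rw [evalA_eq, FreeAlgebra.lift_ι_apply]
      fin_cases i <;> simp [Matrix.add_apply, Matrix.smul_apply, smul_eq_mul]
    rw [hfun, hsd]
    simpa using ((hasDerivAt_id (0:ℂ)).mul_const (![Ex, Ey] i k l)).const_add (![X, Y] i k l)
  | mul f g hf hg =>
    have hfun : (fun t : ℂ => evalM (X + t • Ex) (Y + t • Ey) (f * g) k l)
        = fun t : ℂ => ∑ m : Fin n, evalM (X + t • Ex) (Y + t • Ey) f k m
            * evalM (X + t • Ex) (Y + t • Ey) g m l := by
      funext t; rw [evalA_eq, map_mul, Matrix.mul_apply]; rfl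
    have h2 : sndM (evalD X Y Ex Ey (f * g)) k l
        = ∑ m : Fin n, (sndM (evalD X Y Ex Ey f) k m * evalM X Y g m l
          + evalM X Y f k m * sndM (evalD X Y Ex Ey g) m l) := by
      rw [map_mul, sndM_mul]
      simp [Matrix.mul_apply, fstM_evalD, Finset.sum_add_distrib, add_comm]
    rw [hfun, h2]
    apply HasDerivAt.fun_sum
    intro m _
    have h0f : evalM (X + (0:ℂ) • Ex) (Y + (0:ℂ) • Ey) f = evalM X Y f := by simp
    have h0g : evalM (X + (0:ℂ) • Ex) (Y + (0:ℂ) • Ey) g = evalM X Y g := by simp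
    have := (hf k m).mul (hg m l)
    rw [h0f, h0g] at this
    exact this
  | add f g hf hg =>
    have hfun : (fun t : ℂ => evalM (X + t • Ex) (Y + t • Ey) (f + g) k l)
        = fun t : ℂ => evalM (X + t • Ex) (Y + t • Ey) f k l
            + evalM (X + t • Ex) (Y + t • Ey) g k l := by
      funext t; rw [evalA_eq, map_add]; rfl
    have h2 : sndM (evalD X Y Ex Ey (f + g)) k l
        = sndM (evalD X Y Ex Ey f) k l + sndM (evalD X Y Ex Ey g) k l := by
      rw [map_add]; simp [Matrix.add_apply]
    rw [hfun, h2]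
    exact (hf k l).add (hg k l)

lemma deriv_trace (X Y Ex Ey : Mn n) (f : FreeAlgebra ℂ (Fin 2)) :
    deriv (fun t : ℂ => Matrix.trace (evalM (X + t • Ex) (Y + t • Ey) f)) 0
      = Matrix.trace (sndM (evalD X Y Ex Ey f)) := by
  have : HasDerivAt (fun t : ℂ => Matrix.trace (evalM (X + t • Ex) (Y + t • Ey) f))
      (Matrix.trace (sndM (evalD X Y Ex Ey f))) 0 := by
    simp only [Matrix.trace, Matrix.diag]
    exact HasDerivAt.fun_sum fun k _ => hasDeriv_entry X Y Ex Ey f k k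
  exact this.deriv

end Aux

namespace Aux
variable {n : ℕ}

@[simp] lemma wordProd_nil : wordProd [] = 1 := rfl

lemma wordProd_cons (a : Fin 2) (u : List (Fin 2)) :
    wordProd (a :: u) = FreeAlgebra.ι ℂ a * wordProd u := by
  simp [wordProd]

lemma wordProd_append (u v : List (Fin 2)) :
    wordProd (u ++ v) = wordProd u * wordProd v := by
  simp [wordProd]

lemma sndM_one : sndM (1 : MnD n) = 0 := by
  ext k l
  simp [Matrix.one_apply, apply_ite]

lemma fstM_one : fstM (1 : MnD n) = 1 := by
  ext k l
  simp [Matrix.one_apply, apply_ite]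

lemma snd_evalD_iota (X Y Ex Ey : Mn n) (a : Fin 2) :
    sndM (evalD X Y Ex Ey (FreeAlgebra.ι ℂ a)) = ![Ex, Ey] a := by
  rw [evalD, FreeAlgebra.lift_ι_apply]
  fin_cases a <;> · ext k l; simp [dn]; rfl

lemma evalM_iota (X Y : Mn n) (a : Fin 2) :
    evalM X Y (FreeAlgebra.ι ℂ a) = ![X, Y] a := by
  rw [evalA_eq, FreeAlgebra.lift_ι_apply]

lemma snd_evalD_word (X Y Ex Ey : Mn n) (u : List (Fin 2)) :
    sndM (evalD X Y Ex Ey (wordProd u)) =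
      ∑ i : Fin u.length,
        evalM X Y (wordProd (u.take i)) * (![Ex, Ey] (u.get i))
          * evalM X Y (wordProd (u.drop (i + 1))) := by
  induction u with
  | nil => simp [sndM_one]
  | cons a u ih =>
    rw [wordProd_cons, map_mul, sndM_mul, fstM_evalD, snd_evalD_iota, ih, evalM_iota]
    have hsplit : ∀ (g : Fin (a :: u).length → Mn n),
        ∑ i, g i = g ⟨0, Nat.succ_pos _⟩ + ∑ i : Fin u.length, g i.succ :=
      fun g => Fin.sum_univ_succ g
    rw [hsplit, add_comm (![X, Y] a * _)]
    congr 1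
    · show ![Ex, Ey] a * fstM (evalD X Y Ex Ey (wordProd u))
        = evalM X Y (wordProd ((a :: u).take 0)) * ![Ex, Ey] a
          * evalM X Y (wordProd ((a :: u).drop 1))
      rw [fstM_evalD]
      simp [evalM]
    · rw [Finset.mul_sum]
      apply Finset.sum_congr rfl
      intro i _
      have h1 : (a :: u).take (i.succ.val) = a :: u.take i.val := rfl
      have h2 : (a :: u).drop (i.succ.val + 1) = u.drop (i.val + 1) := rfl
      have h3 : (a :: u).get i.succ = u.get i := rfl
      rw [h1, h2, h3, wordProd_cons]
      rw [evalA_eq, evalA_eq, evalA_eq, map_mul, FreeAlgebra.lift_ι_apply]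
      noncomm_ring

end Aux

namespace Aux
variable {n : ℕ}

lemma evalM_mul (X Y : Mn n) (f g : FreeAlgebra ℂ (Fin 2)) :
    evalM X Y (f * g) = evalM X Y f * evalM X Y g := map_mul (FreeAlgebra.lift ℂ ![X, Y]) f g

lemma trace_snd_word (X Y Ex Ey : Mn n) (u : List (Fin 2)) :
    Matrix.trace (sndM (evalD X Y Ex Ey (wordProd u))) =
      ∑ i : Fin u.length,
        Matrix.trace ((![Ex, Ey] (u.get i)) * evalM X Y (wordProd (rotAt u i))) := by
  rw [snd_evalD_word, Matrix.trace_sum]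
  apply Finset.sum_congr rfl
  intro i _
  rw [rotAt, wordProd_append, evalM_mul, Matrix.trace_mul_cycle, Matrix.trace_mul_comm]

lemma derivX (X Y E : Mn n) (f : FreeAlgebra ℂ (Fin 2)) :
    deriv (fun t : ℂ => Matrix.trace (evalM (X + t • E) Y f)) 0
      = Matrix.trace (sndM (evalD X Y E 0 f)) := by
  have h : (fun t : ℂ => Matrix.trace (evalM (X + t • E) Y f))
      = fun t : ℂ => Matrix.trace (evalM (X + t • E) (Y + t • (0 : Mn n)) f) := by
    funext t; simp
  rw [h, deriv_trace]

lemma derivY (X Y E : Mn n) (f : FreeAlgebra ℂ (Fin 2)) :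
    deriv (fun t : ℂ => Matrix.trace (evalM X (Y + t • E) f)) 0
      = Matrix.trace (sndM (evalD X Y 0 E f)) := by
  have h : (fun t : ℂ => Matrix.trace (evalM X (Y + t • E) f))
      = fun t : ℂ => Matrix.trace (evalM (X + t • (0 : Mn n)) (Y + t • E) f) := by
    funext t; simp
  rw [h, deriv_trace]

lemma fin2cases (c : Fin 2) : c = 0 ∨ c = 1 := by omega

lemma trace_stdBasis_mul (i j : Fin n) (M : Mn n) :
    Matrix.trace (Matrix.single i j (1 : ℂ) * M) = M j i := by
  rw [Matrix.trace]
  rw [Finset.sum_eq_single i]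
  · simp
  · intro b _ hb
    simp [Matrix.diag, hb]
  · simp

lemma traceDX_word (X Y : Mn n) (i j : Fin n) (u : List (Fin 2)) :
    Matrix.trace (sndM (evalD X Y (Matrix.single i j 1) 0 (wordProd u)))
      = ∑ a : Fin u.length,
          if u.get a = 0 then evalM X Y (wordProd (rotAt u a)) j i else 0 := by
  rw [trace_snd_word]
  apply Finset.sum_congr rfl
  intro a _
  rcases fin2cases (u.get a) with h | h <;> rw [h] <;> simp [trace_stdBasis_mul]

lemma traceDY_word (X Y : Mn n) (i j : Fin n) (u : List (Fin 2)) :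
    Matrix.trace (sndM (evalD X Y 0 (Matrix.single i j 1) (wordProd u)))
      = ∑ a : Fin u.length,
          if u.get a = 1 then evalM X Y (wordProd (rotAt u a)) j i else 0 := by
  rw [trace_snd_word]
  apply Finset.sum_congr rfl
  intro a _
  rcases fin2cases (u.get a) with h | h <;> rw [h] <;> simp [trace_stdBasis_mul]

end Aux

namespace Aux
variable {n : ℕ}

lemma sum_swap3 {M : Type*} [AddCommMonoid M] {A B C : Type*} [Fintype A] [Fintype B] [Fintype C]
    (G : A → B → C → M) :
    ∑ i : A, ∑ j : B, ∑ a : C, G i j a = ∑ a : C, ∑ i : A, ∑ j : B, G i j a := by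
  calc ∑ i : A, ∑ j : B, ∑ a : C, G i j a
      = ∑ i : A, ∑ a : C, ∑ j : B, G i j a :=
        Finset.sum_congr rfl fun i _ => Finset.sum_comm
    _ = ∑ a : C, ∑ i : A, ∑ j : B, G i j a := Finset.sum_comm

lemma sum_swap4 {M : Type*} [AddCommMonoid M] {A B C D : Type*} [Fintype A] [Fintype B]
    [Fintype C] [Fintype D] (F : A → B → C → D → M) :
    ∑ i : A, ∑ j : B, ∑ a : C, ∑ b : D, F i j a b
      = ∑ a : C, ∑ b : D, ∑ i : A, ∑ j : B, F i j a b := by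
  rw [sum_swap3 (fun i j a => ∑ b : D, F i j a b)]
  exact Finset.sum_congr rfl fun a _ => sum_swap3 _

lemma sum_entries_trace (P Q : Mn n) :
    ∑ i : Fin n, ∑ j : Fin n, P i j * Q j i = Matrix.trace (P * Q) := by
  simp [Matrix.trace, Matrix.mul_apply, Matrix.diag]

lemma sum_entries_trace' (P Q : Mn n) :
    ∑ i : Fin n, ∑ j : Fin n, P j i * Q i j = Matrix.trace (P * Q) := by
  rw [Finset.sum_comm]
  exact sum_entries_trace P Q

lemma main_word (X Y : Mn n) (ω : Fin 2 → Fin 2 → ℂ)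
    (hxy : ω 0 1 = 1) (hyx : ω 1 0 = -1) (hxx : ω 0 0 = 0) (hyy : ω 1 1 = 0)
    (u v : List (Fin 2)) :
    (∑ i : Fin n, ∑ j : Fin n,
      (Matrix.trace (sndM (evalD X Y (Matrix.single i j 1) 0 (wordProd u)))
        * Matrix.trace (sndM (evalD X Y 0 (Matrix.single j i 1) (wordProd v)))
       - Matrix.trace (sndM (evalD X Y 0 (Matrix.single j i 1) (wordProd u)))
        * Matrix.trace (sndM (evalD X Y (Matrix.single i j 1) 0 (wordProd v)))))
      = Matrix.trace (evalM X Y (wordBracket ω u v)) := by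
  set P : Fin u.length → Mn n := fun a => evalM X Y (wordProd (rotAt u a)) with hP
  set Q : Fin v.length → Mn n := fun b => evalM X Y (wordProd (rotAt v b)) with hQ
  have key : (∑ i : Fin n, ∑ j : Fin n,
      (Matrix.trace (sndM (evalD X Y (Matrix.single i j 1) 0 (wordProd u)))
        * Matrix.trace (sndM (evalD X Y 0 (Matrix.single j i 1) (wordProd v)))
       - Matrix.trace (sndM (evalD X Y 0 (Matrix.single j i 1) (wordProd u)))
        * Matrix.trace (sndM (evalD X Y (Matrix.single i j 1) 0 (wordProd v)))))
      = ∑ a : Fin u.length, ∑ b : Fin v.length,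
          ω (u.get a) (v.get b) * Matrix.trace (P a * Q b) := by
    have step1 : ∀ i j : Fin n,
        (Matrix.trace (sndM (evalD X Y (Matrix.single i j 1) 0 (wordProd u)))
          * Matrix.trace (sndM (evalD X Y 0 (Matrix.single j i 1) (wordProd v)))
         - Matrix.trace (sndM (evalD X Y 0 (Matrix.single j i 1) (wordProd u)))
          * Matrix.trace (sndM (evalD X Y (Matrix.single i j 1) 0 (wordProd v)))) =
        ∑ a : Fin u.length, ∑ b : Fin v.length,
          ((if u.get a = 0 then P a j i else 0) * (if v.get b = 1 then Q b i j else 0)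
           - (if u.get a = 1 then P a i j else 0) * (if v.get b = 0 then Q b j i else 0)) := by
      intro i j
      rw [traceDX_word X Y i j u, traceDY_word X Y j i v, traceDY_word X Y j i u,
        traceDX_word X Y i j v, Finset.sum_mul_sum, Finset.sum_mul_sum,
        ← Finset.sum_sub_distrib]
      exact Finset.sum_congr rfl fun a _ => (Finset.sum_sub_distrib _ _).symm
    calc (∑ i : Fin n, ∑ j : Fin n, _)
        = ∑ i : Fin n, ∑ j : Fin n, ∑ a : Fin u.length, ∑ b : Fin v.length,
            ((if u.get a = 0 then P a j i else 0) * (if v.get b = 1 then Q b i j else 0)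
             - (if u.get a = 1 then P a i j else 0) * (if v.get b = 0 then Q b j i else 0)) :=
          Finset.sum_congr rfl fun i _ => Finset.sum_congr rfl fun j _ => step1 i j
      _ = ∑ a : Fin u.length, ∑ b : Fin v.length, ∑ i : Fin n, ∑ j : Fin n,
            ((if u.get a = 0 then P a j i else 0) * (if v.get b = 1 then Q b i j else 0)
             - (if u.get a = 1 then P a i j else 0) * (if v.get b = 0 then Q b j i else 0)) :=
          sum_swap4 _
      _ = ∑ a : Fin u.length, ∑ b : Fin v.length,
            ω (u.get a) (v.get b) * Matrix.trace (P a * Q b) := by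
          apply Finset.sum_congr rfl
          intro a _
          apply Finset.sum_congr rfl
          intro b _
          rcases fin2cases (u.get a) with ha | ha <;> rcases fin2cases (v.get b) with hb | hb <;>
            rw [ha, hb] <;>
            simp [hxx, hyy, hxy, hyx, sum_entries_trace' (P a) (Q b),
              sum_entries_trace (P a) (Q b)]
  rw [key]
  -- now compute the right-hand side
  rw [wordBracket]
  rw [show evalM X Y = ⇑(FreeAlgebra.lift ℂ ![X, Y]) from rfl, map_sum, Matrix.trace_sum]
  apply Finset.sum_congr rfl
  intro a _
  rw [map_sum, Matrix.trace_sum]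
  apply Finset.sum_congr rfl
  intro b _
  rw [map_smul, Matrix.trace_smul, wordProd_append, map_mul, smul_eq_mul]
  rfl

end Aux

namespace Aux
variable {n : ℕ}

lemma span_wordProd_top :
    Submodule.span ℂ (Set.range wordProd) = ⊤ := by
  rw [eq_top_iff]
  rintro f -
  induction f using FreeAlgebra.induction with
  | grade0 r =>
    rw [Algebra.algebraMap_eq_smul_one]
    exact Submodule.smul_mem _ r (Submodule.subset_span ⟨[], rfl⟩)
  | grade1 i =>
    exact Submodule.subset_span ⟨[i], by simp [wordProd]⟩
  | mul a b ha hb =>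
    have := Submodule.mul_mem_mul ha hb
    rw [Submodule.span_mul_span] at this
    refine Submodule.span_le.mpr ?_ this
    rintro z ⟨z₁, ⟨w₁, rfl⟩, z₂, ⟨w₂, rfl⟩, rfl⟩
    exact Submodule.subset_span ⟨w₁ ++ w₂, by rw [wordProd_append]⟩
  | add a b ha hb => exact Submodule.add_mem _ ha hb

/-- `f ↦ trace (sndM (evalD X Y Ex Ey f))` as a linear map. -/
def Tl (X Y Ex Ey : Mn n) : FreeAlgebra ℂ (Fin 2) →ₗ[ℂ] ℂ :=
  (Matrix.traceLinearMap (Fin n) ℂ ℂ) ∘ₗ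
    ((TrivSqZeroExt.sndHom ℂ ℂ).mapMatrix (m := Fin n) (n := Fin n)) ∘ₗ
      (evalD X Y Ex Ey).toLinearMap

lemma Tl_apply (X Y Ex Ey : Mn n) (f : FreeAlgebra ℂ (Fin 2)) :
    Tl X Y Ex Ey f = Matrix.trace (sndM (evalD X Y Ex Ey f)) := rfl

/-- trace ∘ evalM as a linear map. -/
def Trl (X Y : Mn n) : FreeAlgebra ℂ (Fin 2) →ₗ[ℂ] ℂ :=
  (Matrix.traceLinearMap (Fin n) ℂ ℂ) ∘ₗ (FreeAlgebra.lift ℂ ![X, Y]).toLinearMap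

lemma Trl_apply (X Y : Mn n) (f : FreeAlgebra ℂ (Fin 2)) :
    Trl X Y f = Matrix.trace (evalM X Y f) := rfl

/-- The left-hand side of the proposition, as a bilinear map. -/
def Phi (X Y : Mn n) :
    FreeAlgebra ℂ (Fin 2) →ₗ[ℂ] FreeAlgebra ℂ (Fin 2) →ₗ[ℂ] ℂ :=
  LinearMap.mk₂ ℂ (fun f g => ∑ i : Fin n, ∑ j : Fin n,
      (Tl X Y (Matrix.single i j 1) 0 f * Tl X Y 0 (Matrix.single j i 1) g
       - Tl X Y 0 (Matrix.single j i 1) f * Tl X Y (Matrix.single i j 1) 0 g))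
    (fun f f' g => by
      simp only [map_add, ← Finset.sum_add_distrib]
      exact Finset.sum_congr rfl fun i _ => Finset.sum_congr rfl fun j _ => by ring)
    (fun c f g => by
      simp only [map_smul, smul_eq_mul, Finset.mul_sum]
      exact Finset.sum_congr rfl fun i _ => Finset.sum_congr rfl fun j _ => by ring)
    (fun f g g' => by
      simp only [map_add, ← Finset.sum_add_distrib]
      exact Finset.sum_congr rfl fun i _ => Finset.sum_congr rfl fun j _ => by ring)
    (fun c f g => by
      simp only [map_smul, smul_eq_mul, Finset.mul_sum]
      exact Finset.sum_congr rfl fun i _ => Finset.sum_congr rfl fun j _ => by ring)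

end Aux

namespace Aux
variable {n : ℕ}

lemma Phi_eq (X Y : Mn n) (ω : Fin 2 → Fin 2 → ℂ)
    (hxy : ω 0 1 = 1) (hyx : ω 1 0 = -1) (hxx : ω 0 0 = 0) (hyy : ω 1 1 = 0)
    (Br : FreeAlgebra ℂ (Fin 2) →ₗ[ℂ] FreeAlgebra ℂ (Fin 2) →ₗ[ℂ] FreeAlgebra ℂ (Fin 2))
    (hBr : ∀ u v : List (Fin 2), Br (wordProd u) (wordProd v) = wordBracket ω u v) :
    Phi X Y = Br.compr₂ (Trl X Y) := by
  apply LinearMap.ext_on_range span_wordProd_top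
  intro u
  apply LinearMap.ext_on_range span_wordProd_top
  intro v
  show Phi X Y (wordProd u) (wordProd v) = Trl X Y (Br (wordProd u) (wordProd v))
  rw [hBr, Trl_apply]
  simpa [Phi, LinearMap.mk₂_apply, Tl_apply] using main_word X Y ω hxy hyx hxx hyy u v

end Aux


open Aux in
theorem ginzburg_prop_3_3_one_loop_quiver (n : ℕ) (hn : 1 ≤ n)
    (ω : Fin 2 → Fin 2 → ℂ)
    -- ω(x,y) = 1 = −ω(y,x), ω(x,x) = ω(y,y) = 0:
    (hxy : ω 0 1 = 1) (hyx : ω 1 0 = -1) (hxx : ω 0 0 = 0) (hyy : ω 1 1 = 0)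
    -- `Br` is the ℂ-bilinear pairing `{·,·}_ω`, determined by its values on words:
    (Br : FreeAlgebra ℂ (Fin 2) →ₗ[ℂ] FreeAlgebra ℂ (Fin 2) →ₗ[ℂ] FreeAlgebra ℂ (Fin 2))
    (hBr : ∀ u v : List (Fin 2), Br (wordProd u) (wordProd v) = wordBracket ω u v) :
    ∀ f g : FreeAlgebra ℂ (Fin 2), ∀ X Y : Matrix (Fin n) (Fin n) ℂ,
      (∑ i : Fin n, ∑ j : Fin n,
        (deriv (fun t : ℂ =>
            Matrix.trace (evalM (X + t • Matrix.single i j 1) Y f)) 0 *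
          deriv (fun t : ℂ =>
            Matrix.trace (evalM X (Y + t • Matrix.single j i 1) g)) 0 -
         deriv (fun t : ℂ =>
            Matrix.trace (evalM X (Y + t • Matrix.single j i 1) f)) 0 *
          deriv (fun t : ℂ =>
            Matrix.trace (evalM (X + t • Matrix.single i j 1) Y g)) 0))
        = Matrix.trace (evalM X Y (Br f g)) := by
  intro f g X Y
  have hL : (∑ i : Fin n, ∑ j : Fin n,
        (deriv (fun t : ℂ =>
            Matrix.trace (evalM (X + t • Matrix.single i j 1) Y f)) 0 *
          deriv (fun t : ℂ =>
            Matrix.trace (evalM X (Y + t • Matrix.single j i 1) g)) 0 -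
         deriv (fun t : ℂ =>
            Matrix.trace (evalM X (Y + t • Matrix.single j i 1) f)) 0 *
          deriv (fun t : ℂ =>
            Matrix.trace (evalM (X + t • Matrix.single i j 1) Y g)) 0))
      = Phi X Y f g := by
    apply Finset.sum_congr rfl
    intro i _
    apply Finset.sum_congr rfl
    intro j _
    rw [derivX, derivY, derivY, derivX]
    rfl
  rw [hL, Phi_eq X Y ω hxy hyx hxx hyy Br hBr]
  rfl
end
end

section
/- Let f ∈ A = ℂ⟨x,y⟩. If for every n ≥ 1 and all X, Y ∈ M_n(ℂ) one has Trace(f(X,Y)) = 0, then f ∈ [A,A], the span of commutators. (The key injectivity claim proved in Proposition 4.1 of the paper: the stabilized trace map tr_∞ is injective on A/[A,A] modulo constants.) -/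
/- STATEMENT 14 (key injectivity claim in Proposition 4.1 of the paper): Let
f ∈ A = ℂ⟨x,y⟩. If Trace(f(X,Y)) = 0 for every n ≥ 1 and all X, Y ∈ M_n(ℂ), then
f ∈ [A,A], the span of commutators.

A = ℂ⟨x,y⟩ is modelled as `FreeAlgebra ℂ (Fin 2)`, x the generator `0`, y the
generator `1`. -/

noncomputable section

/-- `[A,A]`: the ℂ-linear span of all commutators in `A = ℂ⟨x,y⟩`. -/
def commSpan : Submodule ℂ (FreeAlgebra ℂ (Fin 2)) :=
  Submodule.span ℂ {z | ∃ a b : FreeAlgebra ℂ (Fin 2), z = a * b - b * a}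

-- auxiliary defs
def W (l : List (Fin 2)) : FreeAlgebra ℂ (Fin 2) := (l.map (FreeAlgebra.ι ℂ)).prod

def ee : FreeAlgebra ℂ (Fin 2) ≃ₐ[ℂ] MonoidAlgebra ℂ (FreeMonoid (Fin 2)) :=
  FreeAlgebra.equivMonoidAlgebraFreeMonoid

lemma W_nil : W [] = 1 := rfl

lemma W_cons (a : Fin 2) (l : List (Fin 2)) : W (a :: l) = FreeAlgebra.ι ℂ a * W l := by
  simp [W]

lemma W_append (l₁ l₂ : List (Fin 2)) : W (l₁ ++ l₂) = W l₁ * W l₂ := by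
  simp [W, List.prod_append]

lemma ee_W (l : List (Fin 2)) :
    ee (W l) = MonoidAlgebra.single (FreeMonoid.ofList l) 1 := by
  induction l with
  | nil => simp [W_nil, MonoidAlgebra.one_def]
  | cons a l ih =>
      rw [W_cons, map_mul, ih]
      have : ee (FreeAlgebra.ι ℂ a) = MonoidAlgebra.single (FreeMonoid.of a) 1 := by
        simp [ee, FreeAlgebra.equivMonoidAlgebraFreeMonoid, FreeAlgebra.lift_ι_apply]
      rw [this, MonoidAlgebra.single_mul_single, one_mul]
      rfl

lemma f_eq_sum (f : FreeAlgebra ℂ (Fin 2)) :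
    f = (ee f).coeff.sum (fun m a => a • W (FreeMonoid.toList m)) := by
  apply ee.injective
  rw [map_finsuppSum]
  conv_lhs => rw [← MonoidAlgebra.sum_coeff_single (ee f)]
  apply Finsupp.sum_congr
  intro m _
  rw [map_smul, ee_W, FreeMonoid.ofList_toList, MonoidAlgebra.smul_single, smul_eq_mul, mul_one]

lemma evalM_W {n : ℕ} (X Y : Matrix (Fin n) (Fin n) ℂ) (v : List (Fin 2)) :
    evalM X Y (W v) = (v.map (fun a => ![X, Y] a)).prod := by
  induction v with
  | nil => simp [W_nil, evalM]
  | cons a v ih =>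
      rw [W_cons]
      show FreeAlgebra.lift ℂ ![X, Y] (FreeAlgebra.ι ℂ a * W v) = _
      rw [map_mul, FreeAlgebra.lift_ι_apply]
      simp only [List.map_cons, List.prod_cons]
      exact congrArg _ ih

lemma smul_pair {n : ℕ} (X Y : Matrix (Fin n) (Fin n) ℂ) (s : ℂ) (a : Fin 2) :
    ![s • X, s • Y] a = s • ![X, Y] a := by
  fin_cases a <;> simp

lemma evalM_smul_W {n : ℕ} (X Y : Matrix (Fin n) (Fin n) ℂ) (s : ℂ) (v : List (Fin 2)) :
    evalM (s • X) (s • Y) (W v) = s ^ v.length • evalM X Y (W v) := by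
  rw [evalM_W, evalM_W]
  induction v with
  | nil => simp
  | cons a v ih =>
      simp only [List.map_cons, List.prod_cons, List.length_cons]
      rw [ih, smul_pair, pow_succ]
      rw [Matrix.smul_mul, Matrix.mul_smul, smul_smul, mul_comm]

lemma trace_evalM {n : ℕ} (X Y : Matrix (Fin n) (Fin n) ℂ) (f : FreeAlgebra ℂ (Fin 2)) :
    Matrix.trace (evalM X Y f)
      = (ee f).coeff.sum (fun m a => a * Matrix.trace (evalM X Y (W (FreeMonoid.toList m)))) := by
  conv_lhs => rw [f_eq_sum f]
  show Matrix.trace (FreeAlgebra.lift ℂ ![X, Y] _) = _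
  rw [map_finsuppSum]
  unfold Finsupp.sum
  rw [Matrix.trace_sum]
  apply Finset.sum_congr rfl
  intro m _
  show (FreeAlgebra.lift ℂ ![X, Y] ((ee f).coeff m • W (FreeMonoid.toList m))).trace = _
  rw [map_smul, Matrix.trace_smul, smul_eq_mul]
  rfl

def Pm (l : List (Fin 2)) [NeZero l.length] (a : Fin 2) : Matrix (Fin l.length) (Fin l.length) ℂ :=
  Matrix.of fun i j => if l.get i = a ∧ j = i + 1 then 1 else 0

open Fin.CommRing in
open scoped Classical in
lemma prod_Pm (l : List (Fin 2)) [NeZero l.length] (v : List (Fin 2)) (i j : Fin l.length) :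
    ((v.map (Pm l)).prod) i j =
      if (∀ t : ℕ, ∀ ht : t < v.length, l.get (i + (t : Fin l.length)) = v.get ⟨t, ht⟩)
          ∧ j = i + (v.length : Fin l.length) then 1 else 0 := by
  induction v generalizing i with
  | nil =>
      simp only [List.map_nil, List.prod_nil, List.length_nil, Nat.cast_zero, add_zero]
      rw [Matrix.one_apply]
      refine if_congr ?_ rfl rfl
      constructor
      · rintro rfl
        exact ⟨fun t ht => absurd ht (Nat.not_lt_zero t), rfl⟩
      · rintro ⟨-, rfl⟩; rfl
  | cons a v ih =>
      have hcast : ∀ t : ℕ, i + (((t + 1 : ℕ)) : Fin l.length)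
          = (i + 1) + (t : Fin l.length) := by
        intro t; push_cast; ring
      simp only [List.map_cons, List.prod_cons]
      rw [Matrix.mul_apply]
      have hPm : ∀ m, Pm l a i m = if l.get i = a ∧ m = i + 1 then 1 else 0 := by
        intro m; simp only [Pm, Matrix.of_apply]
      by_cases ha : l.get i = a
      · have hterm : ∀ m ∈ Finset.univ, Pm l a i m * ((v.map (Pm l)).prod) m j
            = if m = i + 1 then ((v.map (Pm l)).prod) m j else 0 := by
          intro m _
          rw [hPm]
          by_cases hm : m = i + 1
          · rw [if_pos ⟨ha, hm⟩, one_mul, if_pos hm]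
          · rw [if_neg (fun hc => hm hc.2), zero_mul, if_neg hm]
        rw [Finset.sum_congr rfl hterm, Finset.sum_ite_eq' Finset.univ (i + 1) _]
        simp only [Finset.mem_univ, if_true]
        rw [ih (i + 1)]
        refine if_congr ?_ rfl rfl
        constructor
        · rintro ⟨h1, rfl⟩
          constructor
          · intro t ht
            cases t with
            | zero => simpa using ha
            | succ t =>
                rw [hcast t]
                exact h1 t (by simpa using ht)
          · show _ = i + ((v.length + 1 : ℕ) : Fin l.length)
            rw [hcast]
        · rintro ⟨h2, hj⟩
          rw [show ((a :: v).length : ℕ) = v.length + 1 from rfl, hcast] at hj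
          subst hj
          constructor
          · intro t ht
            rw [← hcast t]
            exact h2 (t + 1) (by simpa using ht)
          · rfl
      · rw [Finset.sum_eq_zero, if_neg]
        · rintro ⟨h2, -⟩
          exact ha (by simpa using h2 0 (Nat.succ_pos _))
        · intro m _
          rw [hPm, if_neg (fun hc => ha hc.1), zero_mul]

open Fin.CommRing in
open scoped Classical in
lemma trace_prod_Pm (l : List (Fin 2)) [NeZero l.length] (v : List (Fin 2))
    (hv : v.length = l.length) :
    Matrix.trace ((v.map (Pm l)).prod)
      = ∑ jj ∈ Finset.range l.length, (if l.rotate jj = v then (1 : ℂ) else 0) := by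
  have hpos : 0 < l.length := Nat.pos_of_ne_zero (NeZero.ne _)
  have hidx : ∀ (i : Fin l.length) (t : ℕ),
      (i + (t : Fin l.length)) = ⟨(t + i.val) % l.length, Nat.mod_lt _ hpos⟩ := by
    intro i t
    apply Fin.ext
    simp only [Fin.add_def, Fin.val_natCast]
    conv_lhs => rw [Nat.add_mod]
    conv_rhs => rw [Nat.add_mod]
    rw [Nat.mod_mod_of_dvd _ dvd_rfl, Nat.add_comm]
  have hdiag : ∀ i : Fin l.length,
      ((v.map (Pm l)).prod) i i = if l.rotate i.val = v then (1 : ℂ) else 0 := by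
    intro i
    rw [prod_Pm l v i i]
    refine if_congr ?_ rfl rfl
    have hc : (v.length : Fin l.length) = 0 := by rw [hv]; exact Fin.natCast_self _
    constructor
    · rintro ⟨h1, -⟩
      apply List.ext_get (by simp [hv])
      intro t h1t h2t
      rw [List.get_rotate]
      rw [← h1 t h2t, hidx]
    · rintro rfl
      refine ⟨?_, by rw [hc, add_zero]⟩
      intro t ht
      rw [List.get_rotate, hidx]
  rw [Matrix.trace]
  calc ∑ i : Fin l.length, ((v.map (Pm l)).prod).diag i
      = ∑ i : Fin l.length,
        (fun jj => if l.rotate jj = v then (1 : ℂ) else 0) i.val :=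
        Finset.sum_congr rfl (fun i _ => hdiag i)
    _ = _ := Fin.sum_univ_eq_sum_range (fun jj => if l.rotate jj = v then (1 : ℂ) else 0) l.length

lemma evalM_zero_W (v : List (Fin 2)) :
    evalM (0 : Matrix (Fin 1) (Fin 1) ℂ) 0 (W v) = if v = [] then 1 else 0 := by
  cases v with
  | nil => simp [W_nil, evalM]
  | cons a v =>
      rw [evalM_W, if_neg (List.cons_ne_nil a v)]
      simp only [List.map_cons, List.prod_cons]
      have h0 : (![(0 : Matrix (Fin 1) (Fin 1) ℂ), 0]) a = 0 := by fin_cases a <;> simp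
      rw [h0, Matrix.zero_mul]

lemma const_coeff_zero (f : FreeAlgebra ℂ (Fin 2))
    (h : ∀ n : ℕ, 1 ≤ n → ∀ X Y : Matrix (Fin n) (Fin n) ℂ,
      Matrix.trace (evalM X Y f) = 0) :
    (ee f).coeff 1 = 0 := by
  classical
  have h1 := h 1 le_rfl 0 0
  rw [trace_evalM] at h1
  rw [← h1, Finsupp.sum]
  symm
  rw [Finset.sum_congr rfl (g := fun m => if m = 1 then (ee f).coeff m else 0) ?_,
    Finset.sum_ite_eq' (ee f).coeff.support 1 (fun m => (ee f).coeff m)]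
  · split_ifs with hs
    · rfl
    · exact (Finsupp.notMem_support_iff.mp hs).symm
  · intro m _
    rw [evalM_zero_W]
    by_cases hm : m = 1
    · subst hm
      rw [if_pos FreeMonoid.toList_one, Matrix.trace_one]
      simp
    · rw [if_neg (fun hc => hm (by rw [← FreeMonoid.ofList_toList m, hc]; rfl)),
        Matrix.trace_zero, mul_zero]
      simp [hm]

lemma cyclic_sum_zero (f : FreeAlgebra ℂ (Fin 2))
    (h : ∀ n : ℕ, 1 ≤ n → ∀ X Y : Matrix (Fin n) (Fin n) ℂ,
      Matrix.trace (evalM X Y f) = 0)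
    (l : List (Fin 2)) (hl : l ≠ []) :
    ∑ j ∈ Finset.range l.length, (ee f).coeff (FreeMonoid.ofList (l.rotate j)) = 0 := by
  classical
  haveI : NeZero l.length := ⟨by simpa using hl⟩
  have hpos : 1 ≤ l.length := Nat.pos_of_ne_zero (NeZero.ne _)
  have hXY : ∀ a : Fin 2, ![Pm l 0, Pm l 1] a = Pm l a := by
    intro a; fin_cases a <;> rfl
  set q : Polynomial ℂ := (ee f).coeff.sum (fun m a =>
    Polynomial.C (a * Matrix.trace (evalM (Pm l 0) (Pm l 1) (W (FreeMonoid.toList m))))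
      * Polynomial.X ^ ((FreeMonoid.toList m).length)) with hq
  have heval : ∀ s : ℂ, q.eval s = 0 := by
    intro s
    have hs := h l.length hpos (s • Pm l 0) (s • Pm l 1)
    rw [trace_evalM] at hs
    rw [← hs, hq, Finsupp.sum, Finsupp.sum, Polynomial.eval_finset_sum]
    apply Finset.sum_congr rfl
    intro m _
    rw [Polynomial.eval_mul, Polynomial.eval_C, Polynomial.eval_pow, Polynomial.eval_X,
      evalM_smul_W, Matrix.trace_smul, smul_eq_mul]
    ring
  have hq0 : q = 0 := Polynomial.funext (fun r => by rw [heval r, Polynomial.eval_zero])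
  have hcoeff : q.coeff l.length = 0 := by rw [hq0]; simp
  rw [hq, Finsupp.sum, Polynomial.finset_sum_coeff] at hcoeff
  have hterm : ∀ m ∈ (ee f).coeff.support,
      (Polynomial.C ((ee f).coeff m
          * Matrix.trace (evalM (Pm l 0) (Pm l 1) (W (FreeMonoid.toList m))))
        * Polynomial.X ^ (FreeMonoid.toList m).length).coeff l.length
      = ∑ j ∈ Finset.range l.length,
          (if m = FreeMonoid.ofList (l.rotate j) then (ee f).coeff m else 0) := by
    intro m _
    rw [Polynomial.coeff_C_mul, Polynomial.coeff_X_pow]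
    by_cases hlen : (FreeMonoid.toList m).length = l.length
    · rw [if_pos hlen.symm, mul_one]
      have hEv : evalM (Pm l 0) (Pm l 1) (W (FreeMonoid.toList m))
          = (((FreeMonoid.toList m).map (Pm l)).prod) := by
        rw [evalM_W]
        congr 1
        exact List.map_congr_left (fun a _ => hXY a)
      rw [hEv, trace_prod_Pm l (FreeMonoid.toList m) hlen, Finset.mul_sum]
      apply Finset.sum_congr rfl
      intro j _
      rw [mul_ite, mul_one, mul_zero]
      refine if_congr ?_ rfl rfl
      constructor
      · intro hr
        rw [hr]
        exact (FreeMonoid.ofList_toList m).symm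
      · intro hm'
        rw [hm', FreeMonoid.toList_ofList]
    · rw [if_neg (fun hc => hlen hc.symm), mul_zero]
      symm
      apply Finset.sum_eq_zero
      intro j _
      rw [if_neg]
      intro hm'
      exact hlen (by rw [hm', FreeMonoid.toList_ofList, List.length_rotate])
  rw [Finset.sum_congr rfl hterm, Finset.sum_comm] at hcoeff
  rw [← hcoeff]
  apply Finset.sum_congr rfl
  intro j _
  rw [Finset.sum_ite_eq' (ee f).coeff.support (FreeMonoid.ofList (l.rotate j)) (fun m => (ee f).coeff m)]
  split_ifs with hs
  · rfl
  · exact Finsupp.notMem_support_iff.mp hs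

lemma W_sub_rotate_mem (l : List (Fin 2)) (j : ℕ) (hj : j ≤ l.length) :
    W l - W (l.rotate j) ∈ commSpan := by
  have h1 : W l = W (l.take j) * W (l.drop j) := by
    conv_lhs => rw [show l = l.take j ++ l.drop j from (List.take_append_drop j l).symm]
    rw [W_append]
  have h2 : W (l.rotate j) = W (l.drop j) * W (l.take j) := by
    rw [List.rotate_eq_drop_append_take hj, W_append]
  rw [h1, h2]
  exact Submodule.subset_span ⟨W (l.take j), W (l.drop j), rfl⟩

lemma rot_inv (L : List (Fin 2)) (j : ℕ) (hj : j < L.length) :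
    (L.rotate j).rotate ((L.length - j) % L.length) = L := by
  rw [List.rotate_rotate]
  rcases Nat.eq_zero_or_pos j with rfl | hjpos
  · rw [Nat.zero_add, List.rotate_mod, Nat.sub_zero, List.rotate_length]
  · rw [Nat.mod_eq_of_lt (by omega), show j + (L.length - j) = L.length by omega,
      List.rotate_length]

lemma mod_inv_idx (j k : ℕ) (hj : j < k) : (k - (k - j) % k) % k = j := by
  rcases Nat.eq_zero_or_pos j with rfl | hjpos
  · rw [Nat.sub_zero, Nat.mod_self, Nat.sub_zero, Nat.mod_self]
  · have h1 : (k - j) % k = k - j := Nat.mod_eq_of_lt (by omega)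
    rw [h1, show k - (k - j) = j by omega, Nat.mod_eq_of_lt hj]

lemma rotate_sum_reindex (F : MonoidAlgebra ℂ (FreeMonoid (Fin 2)))
    (T : Finset (FreeMonoid (Fin 2)))
    (hclosed : ∀ m ∈ T, ∀ j : ℕ, FreeMonoid.ofList ((FreeMonoid.toList m).rotate j) ∈ T) :
    ∑ m ∈ T, ∑ j ∈ Finset.range (FreeMonoid.toList m).length,
        (((FreeMonoid.toList m).length : ℂ)⁻¹ * F.coeff m) • W ((FreeMonoid.toList m).rotate j)
    = ∑ m ∈ T, ∑ j ∈ Finset.range (FreeMonoid.toList m).length,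
        (((FreeMonoid.toList m).length : ℂ)⁻¹
          * F.coeff (FreeMonoid.ofList ((FreeMonoid.toList m).rotate j))) • W (FreeMonoid.toList m) := by
  rw [Finset.sum_sigma' T _ (fun m j =>
      (((FreeMonoid.toList m).length : ℂ)⁻¹ * F.coeff m) • W ((FreeMonoid.toList m).rotate j)),
    Finset.sum_sigma' T _ (fun m j =>
      (((FreeMonoid.toList m).length : ℂ)⁻¹
        * F.coeff (FreeMonoid.ofList ((FreeMonoid.toList m).rotate j))) • W (FreeMonoid.toList m))]
  apply Finset.sum_nbij'
    (i := fun p => ⟨FreeMonoid.ofList ((FreeMonoid.toList p.1).rotate p.2),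
      ((FreeMonoid.toList p.1).length - p.2) % (FreeMonoid.toList p.1).length⟩)
    (j := fun p => ⟨FreeMonoid.ofList ((FreeMonoid.toList p.1).rotate p.2),
      ((FreeMonoid.toList p.1).length - p.2) % (FreeMonoid.toList p.1).length⟩)
  · rintro ⟨m, j⟩ hp
    rw [Finset.mem_sigma] at hp ⊢
    obtain ⟨hm, hj⟩ := hp
    have hj' := Finset.mem_range.mp hj
    have hpos : 0 < (FreeMonoid.toList m).length := Nat.lt_of_le_of_lt (Nat.zero_le _) hj'
    refine ⟨hclosed m hm j, Finset.mem_range.mpr ?_⟩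
    rw [FreeMonoid.toList_ofList, List.length_rotate]
    exact Nat.mod_lt _ hpos
  · rintro ⟨m, j⟩ hp
    rw [Finset.mem_sigma] at hp ⊢
    obtain ⟨hm, hj⟩ := hp
    have hj' := Finset.mem_range.mp hj
    have hpos : 0 < (FreeMonoid.toList m).length := Nat.lt_of_le_of_lt (Nat.zero_le _) hj'
    refine ⟨hclosed m hm j, Finset.mem_range.mpr ?_⟩
    rw [FreeMonoid.toList_ofList, List.length_rotate]
    exact Nat.mod_lt _ hpos
  · rintro ⟨m, j⟩ hp
    rw [Finset.mem_sigma] at hp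
    obtain ⟨hm, hj⟩ := hp
    have hj' := Finset.mem_range.mp hj
    simp only [FreeMonoid.toList_ofList, List.length_rotate]
    congr 1
    · rw [rot_inv _ j hj', FreeMonoid.ofList_toList]
    · rw [mod_inv_idx j _ hj']
  · rintro ⟨m, j⟩ hp
    rw [Finset.mem_sigma] at hp
    obtain ⟨hm, hj⟩ := hp
    have hj' := Finset.mem_range.mp hj
    simp only [FreeMonoid.toList_ofList, List.length_rotate]
    congr 1
    · rw [rot_inv _ j hj', FreeMonoid.ofList_toList]
    · rw [mod_inv_idx j _ hj']
  · rintro ⟨m, j⟩ hp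
    rw [Finset.mem_sigma] at hp
    obtain ⟨hm, hj⟩ := hp
    have hj' := Finset.mem_range.mp hj
    simp only [FreeMonoid.toList_ofList, List.length_rotate]
    rw [rot_inv _ j hj', FreeMonoid.ofList_toList]

lemma mem_commSpan_of (f : FreeAlgebra ℂ (Fin 2)) (h0 : (ee f).coeff 1 = 0)
    (hrot : ∀ l : List (Fin 2), l ≠ [] →
      ∑ j ∈ Finset.range l.length, (ee f).coeff (FreeMonoid.ofList (l.rotate j)) = 0) :
    f ∈ commSpan := by
  classical
  set T : Finset (FreeMonoid (Fin 2)) := (ee f).coeff.support.biUnion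
    (fun m => (Finset.range (FreeMonoid.toList m).length).image
      (fun j => FreeMonoid.ofList ((FreeMonoid.toList m).rotate j))) with hT
  have hTne : ∀ m ∈ T, FreeMonoid.toList m ≠ [] := by
    intro m hm
    obtain ⟨m₀, hm₀, hmem⟩ := Finset.mem_biUnion.mp hm
    obtain ⟨j, hj, rfl⟩ := Finset.mem_image.mp hmem
    rw [FreeMonoid.toList_ofList]
    intro hc
    have hlen : (FreeMonoid.toList m₀).length = 0 := by
      rw [← List.length_rotate (FreeMonoid.toList m₀) j, hc]
      rfl
    exact absurd (Finset.mem_range.mp hj) (by omega)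
  have hsub : (ee f).coeff.support ⊆ T := by
    intro m hm
    apply Finset.mem_biUnion.mpr
    refine ⟨m, hm, Finset.mem_image.mpr ⟨0, ?_, ?_⟩⟩
    · apply Finset.mem_range.mpr
      apply Nat.pos_of_ne_zero
      intro hc
      apply Finsupp.mem_support_iff.mp hm
      have hm1 : m = 1 := by
        rw [← FreeMonoid.ofList_toList m, List.length_eq_zero_iff.mp hc]
        rfl
      rw [hm1]
      exact h0
    · rw [List.rotate_zero, FreeMonoid.ofList_toList]
  have hclosed : ∀ m ∈ T, ∀ j : ℕ,
      FreeMonoid.ofList ((FreeMonoid.toList m).rotate j) ∈ T := by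
    intro m hm j
    obtain ⟨m₀, hm₀, hmem⟩ := Finset.mem_biUnion.mp hm
    obtain ⟨j₀, hj₀, rfl⟩ := Finset.mem_image.mp hmem
    have hpos : 0 < (FreeMonoid.toList m₀).length :=
      Nat.lt_of_le_of_lt (Nat.zero_le _) (Finset.mem_range.mp hj₀)
    rw [FreeMonoid.toList_ofList, List.rotate_rotate]
    exact Finset.mem_biUnion.mpr ⟨m₀, hm₀, Finset.mem_image.mpr
      ⟨(j₀ + j) % (FreeMonoid.toList m₀).length,
        Finset.mem_range.mpr (Nat.mod_lt _ hpos), by rw [List.rotate_mod]⟩⟩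
  have hf : f = ∑ m ∈ T, (ee f).coeff m • W (FreeMonoid.toList m) := by
    conv_lhs => rw [f_eq_sum f]
    exact Finsupp.sum_of_support_subset _ hsub _ (fun m _ => zero_smul ℂ _)
  rw [hf]
  have hdecomp : ∀ m ∈ T, (ee f).coeff m • W (FreeMonoid.toList m)
      = (((FreeMonoid.toList m).length : ℂ)⁻¹ * (ee f).coeff m) •
          (∑ j ∈ Finset.range (FreeMonoid.toList m).length,
            (W (FreeMonoid.toList m) - W ((FreeMonoid.toList m).rotate j)))
        + ∑ j ∈ Finset.range (FreeMonoid.toList m).length,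
            (((FreeMonoid.toList m).length : ℂ)⁻¹ * (ee f).coeff m)
              • W ((FreeMonoid.toList m).rotate j) := by
    intro m hm
    have hk : ((FreeMonoid.toList m).length : ℂ) ≠ 0 := by
      rw [Nat.cast_ne_zero]
      simpa [List.length_eq_zero_iff] using hTne m hm
    rw [← Finset.smul_sum, ← smul_add, Finset.sum_sub_distrib, sub_add_cancel,
      Finset.sum_const, Finset.card_range, ← Nat.cast_smul_eq_nsmul ℂ, smul_smul]
    have hc : (((FreeMonoid.toList m).length : ℂ)⁻¹ * (ee f).coeff m)
        * ((FreeMonoid.toList m).length : ℂ) = (ee f).coeff m := by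
      field_simp
    rw [hc]
  rw [Finset.sum_congr rfl hdecomp, Finset.sum_add_distrib]
  apply Submodule.add_mem
  · apply Submodule.sum_mem
    intro m hm
    apply Submodule.smul_mem
    apply Submodule.sum_mem
    intro j hj
    exact W_sub_rotate_mem _ j (le_of_lt (Finset.mem_range.mp hj))
  · rw [rotate_sum_reindex (ee f) T hclosed]
    have hz : ∀ m ∈ T, ∑ j ∈ Finset.range (FreeMonoid.toList m).length,
        (((FreeMonoid.toList m).length : ℂ)⁻¹
          * (ee f).coeff (FreeMonoid.ofList ((FreeMonoid.toList m).rotate j)))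
            • W (FreeMonoid.toList m) = 0 := by
      intro m hm
      rw [← Finset.sum_smul, ← Finset.mul_sum, hrot _ (hTne m hm), mul_zero, zero_smul]
    rw [Finset.sum_congr rfl hz, Finset.sum_const_zero]
    exact Submodule.zero_mem _

theorem ginzburg_stabilized_trace_injective (f : FreeAlgebra ℂ (Fin 2))
    (h : ∀ n : ℕ, 1 ≤ n → ∀ X Y : Matrix (Fin n) (Fin n) ℂ,
      Matrix.trace (evalM X Y f) = 0) :
    f ∈ commSpan := by
  exact mem_commSpan_of f (const_coeff_zero f h) (cyclic_sum_zero f h)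
end
end
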